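/- arXiv:2307.04017 — 2 statements merged into one kernel-verified Lean document; each statement's English description precedes it below -/
import Mathlib

section
/- Let γ > 0 be such that for all n > 2 and all N ≤ γ·b_n the Fibonacci cubature formula b_n^{−1} Σ_{ν=1}^{b_n} f(y^ν) equals (2π)^{−2} ∫_{𝕋²} f dx for every f ∈ 𝒯(Γ(N,2)). For a given n, let n' ∈ ℕ be the largest natural number satisfying 2^{n'} ≤ γ·b_n/9. Then for any s = (s_1,s_2) ∈ ℤ_+² with s_1 + s_2 ≤ n' and any f ∈ 𝒯(R(s)): f(x) = (2π)^{−2} ∫_{𝕋²} f(y) 𝒱_{2^s}(x − y) dy = b_n^{−1} Σ_{ν=1}^{b_n} f(y^ν) 𝒱_{2^s}(x − y^ν) for all x ∈ 𝕋². -/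
noncomputable section
open scoped BigOperators
open MeasureTheory

/-- The cube `[0, 2π]^d`, representing the torus `𝕋^d`. -/
def cube (d : ℕ) : Set (Fin d → ℝ) := Set.Icc 0 (fun _ => 2 * Real.pi)

/-- Uniform norm over the torus `𝕋^d = [0, 2π]^d`. -/
def unifNorm {d : ℕ} (f : (Fin d → ℝ) → ℂ) : ℝ :=
  ⨆ x : cube d, ‖f ↑x‖

/-- The exponential `e^{i(k,x)}`. -/
def expFun {d : ℕ} (k : Fin d → ℤ) : (Fin d → ℝ) → ℂ :=
  fun x => Complex.exp (Complex.I * ∑ j, (k j : ℂ) * (x j : ℂ))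

/-- `𝒯(Q)`: the space of trigonometric polynomials with frequencies in `Q`. -/
def trigSpace {d : ℕ} (Q : Finset (Fin d → ℤ)) : Submodule ℂ ((Fin d → ℝ) → ℂ) :=
  Submodule.span ℂ (expFun '' (Q : Set (Fin d → ℤ)))

/-- `R(s) = {k : |k_j| < 2^{s_j}}`. -/
def Rbox {d : ℕ} (s : Fin d → ℕ) : Finset (Fin d → ℤ) :=
  Fintype.piFinset fun j => Finset.Ioo (-(2 ^ (s j) : ℤ)) ((2 : ℤ) ^ (s j))

/-- Best uniform approximation `d(f, 𝒯(Q))_∞`. -/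
def distT {d : ℕ} (f : (Fin d → ℝ) → ℂ) (Q : Finset (Fin d → ℤ)) : ℝ :=
  ⨅ u : trigSpace Q, unifNorm (f - (u : (Fin d → ℝ) → ℂ))

/-- `2π`-periodicity in each variable. -/
def Periodic2Pi {d : ℕ} (f : (Fin d → ℝ) → ℂ) : Prop :=
  ∀ (x : Fin d → ℝ) (j : Fin d), f (x + (2 * Real.pi) • (Pi.single j 1 : Fin d → ℝ)) = f x

/-- The Fibonacci numbers `b_0 = b_1 = 1`, `b_n = b_{n-1} + b_{n-2}`. -/
def fibb : ℕ → ℕ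
  | 0 => 1
  | 1 => 1
  | n + 2 => fibb (n + 1) + fibb n

/-- The hyperbolic cross `Γ(N, d)`. -/
def hyperCross (d N : ℕ) : Finset (Fin d → ℤ) :=
  (Fintype.piFinset fun _ : Fin d => Finset.Icc (-(N : ℤ)) (N : ℤ)).filter
    fun k => (∏ j, max |k j| 1) ≤ (N : ℤ)

/-- The Fibonacci points `y^ν = (2πν/b_n, 2π{ν b_{n-1}/b_n})`. -/
def fibPoint (n ν : ℕ) : Fin 2 → ℝ :=
  ![2 * Real.pi * ν / fibb n, 2 * Real.pi * Int.fract ((↑(ν * fibb (n - 1)) : ℝ) / fibb n)]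

/-- The Dirichlet kernel `𝒟_l`. -/
def dirichletK (l : ℕ) (x : ℝ) : ℂ :=
  ∑ k ∈ Finset.Icc (-(l : ℤ)) (l : ℤ), Complex.exp (Complex.I * (k : ℂ) * (x : ℂ))

/-- The de la Vallée Poussin kernel `𝒱_j`. -/
def vpK (j : ℕ) (x : ℝ) : ℂ := (j : ℂ)⁻¹ * ∑ l ∈ Finset.Ico j (2 * j), dirichletK l x

/-- The multivariate de la Vallée Poussin kernel `𝒱_{(j_1,…,j_d)}`. -/
def vpKd {d : ℕ} (j : Fin d → ℕ) (x : Fin d → ℝ) : ℂ := ∏ i, vpK (j i) (x i)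

lemma integral_exp_Icc (m : ℤ) :
    ∫ t in Set.Icc (0:ℝ) (2*Real.pi), Complex.exp (Complex.I * m * t)
      = if m = 0 then ((2*Real.pi : ℝ) : ℂ) else 0 := by
  have hle : (0:ℝ) ≤ 2*Real.pi := by positivity
  rw [MeasureTheory.integral_Icc_eq_integral_Ioc, ← intervalIntegral.integral_of_le hle]
  by_cases hm : m = 0
  · simp [hm]
  · have hc : (Complex.I * (m:ℂ)) ≠ 0 := by
      simp [Complex.I_ne_zero, hm]
    rw [if_neg hm, integral_exp_mul_complex hc]
    have h1 : Complex.I * (m:ℂ) * ((2*Real.pi : ℝ) : ℂ) = (m:ℤ) * (2*Real.pi*Complex.I) := by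
      push_cast; ring
    rw [h1, Complex.exp_int_mul_two_pi_mul_I]
    simp

lemma vpK_reproduce (j : ℕ) (hj : 0 < j) (k : ℤ) (hk : |k| < (j:ℤ)) (x : ℝ) :
    ∫ t in Set.Icc (0:ℝ) (2*Real.pi), Complex.exp (Complex.I * k * t) * vpK j (x - t)
      = ((2*Real.pi : ℝ) : ℂ) * Complex.exp (Complex.I * k * x) := by
  have hjC : ((j:ℂ)) ≠ 0 := Nat.cast_ne_zero.mpr hj.ne'
  have hF : ∀ (m : ℤ), ∀ t : ℝ,
      Complex.exp (Complex.I * k * t) * ((j:ℂ)⁻¹ * Complex.exp (Complex.I * m * ((x - t : ℝ) : ℂ)))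
        = ((j:ℂ)⁻¹ * Complex.exp (Complex.I * m * x)) * Complex.exp (Complex.I * ((k - m : ℤ) : ℂ) * t) := by
    intro m t
    rw [show (Complex.I * m * ((x - t:ℝ):ℂ)) = Complex.I*m*x - Complex.I*m*t by push_cast; ring,
      Complex.exp_sub,
      show (Complex.I * ((k-m:ℤ):ℂ) * t) = Complex.I*k*t - Complex.I*m*t by push_cast; ring,
      Complex.exp_sub]
    field_simp [Complex.exp_ne_zero]
  have hint : ∀ (m : ℤ), IntegrableOn
      (fun t : ℝ => Complex.exp (Complex.I * k * t) * ((j:ℂ)⁻¹ * Complex.exp (Complex.I * m * ((x - t : ℝ) : ℂ))))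
      (Set.Icc (0:ℝ) (2*Real.pi)) := by
    intro m
    apply Continuous.integrableOn_Icc
    fun_prop
  have hpt : ∀ t : ℝ, Complex.exp (Complex.I * k * t) * vpK j (x - t)
      = ∑ l ∈ Finset.Ico j (2*j), ∑ m ∈ Finset.Icc (-(l:ℤ)) (l:ℤ),
          Complex.exp (Complex.I * k * t) * ((j:ℂ)⁻¹ * Complex.exp (Complex.I * m * ((x - t : ℝ) : ℂ))) := by
    intro t
    simp only [vpK, dirichletK, Finset.mul_sum, Finset.sum_mul]
  calc ∫ t in Set.Icc (0:ℝ) (2*Real.pi), Complex.exp (Complex.I * k * t) * vpK j (x - t)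
      = ∫ t in Set.Icc (0:ℝ) (2*Real.pi), ∑ l ∈ Finset.Ico j (2*j), ∑ m ∈ Finset.Icc (-(l:ℤ)) (l:ℤ),
          Complex.exp (Complex.I * k * t) * ((j:ℂ)⁻¹ * Complex.exp (Complex.I * m * ((x - t : ℝ) : ℂ))) := by
        exact MeasureTheory.setIntegral_congr_fun measurableSet_Icc (fun t _ => hpt t)
    _ = ∑ l ∈ Finset.Ico j (2*j), ∑ m ∈ Finset.Icc (-(l:ℤ)) (l:ℤ),
          ∫ t in Set.Icc (0:ℝ) (2*Real.pi),
            Complex.exp (Complex.I * k * t) * ((j:ℂ)⁻¹ * Complex.exp (Complex.I * m * ((x - t : ℝ) : ℂ))) := by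
        rw [MeasureTheory.integral_finset_sum]
        · exact Finset.sum_congr rfl fun l _ => MeasureTheory.integral_finset_sum _ (fun m _ => hint m)
        · exact fun l _ => MeasureTheory.integrable_finset_sum _ (fun m _ => hint m)
    _ = ∑ l ∈ Finset.Ico j (2*j), ∑ m ∈ Finset.Icc (-(l:ℤ)) (l:ℤ),
          (if m = k then ((j:ℂ)⁻¹ * Complex.exp (Complex.I * m * x)) * ((2*Real.pi : ℝ) : ℂ) else 0) := by
        refine Finset.sum_congr rfl fun l _ => Finset.sum_congr rfl fun m _ => ?_
        rw [MeasureTheory.setIntegral_congr_fun measurableSet_Icc (fun t _ => hF m t),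
          MeasureTheory.integral_const_mul, integral_exp_Icc]
        by_cases hm : m = k
        · simp [hm]
        · rw [if_neg (by omega), if_neg hm, mul_zero]
    _ = ∑ l ∈ Finset.Ico j (2*j), ((j:ℂ)⁻¹ * Complex.exp (Complex.I * k * x)) * ((2*Real.pi : ℝ) : ℂ) := by
        refine Finset.sum_congr rfl fun l hl => ?_
        rw [Finset.sum_ite_eq' (Finset.Icc (-(l:ℤ)) (l:ℤ)) k]
        rw [if_pos]
        rw [Finset.mem_Icc]
        have hjl : (j:ℤ) ≤ l := by exact_mod_cast (Finset.mem_Ico.mp hl).1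
        constructor <;> [skip; skip] <;> (cases' abs_lt.mp hk with h1 h2) <;> omega
    _ = ((2*Real.pi : ℝ) : ℂ) * Complex.exp (Complex.I * k * x) := by
        rw [Finset.sum_const, Nat.card_Ico]
        have : 2*j - j = j := by omega
        rw [this, nsmul_eq_mul]
        field_simp

lemma cube2_integral (F G : ℝ → ℂ) :
    ∫ y in cube 2, F (y 0) * G (y 1)
      = (∫ t in Set.Icc (0:ℝ) (2*Real.pi), F t) * (∫ t in Set.Icc (0:ℝ) (2*Real.pi), G t) := by
  have hmp := volume_preserving_finTwoArrow ℝ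
  have hemb : MeasurableEmbedding (MeasurableEquiv.finTwoArrow (α := ℝ)) :=
    MeasurableEquiv.measurableEmbedding _
  have hpre : (MeasurableEquiv.finTwoArrow (α := ℝ)) ⁻¹'
      (Set.Icc (0:ℝ) (2*Real.pi) ×ˢ Set.Icc (0:ℝ) (2*Real.pi)) = cube 2 := by
    ext y
    simp [MeasurableEquiv.finTwoArrow, cube, Set.mem_Icc, Pi.le_def, Fin.forall_fin_two, Prod.le_def]
  rw [← hpre]
  have := MeasurePreserving.setIntegral_preimage_emb hmp hemb (fun p : ℝ × ℝ => F p.1 * G p.2)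
    (Set.Icc (0:ℝ) (2*Real.pi) ×ˢ Set.Icc (0:ℝ) (2*Real.pi))
  rw [show (∫ y in (MeasurableEquiv.finTwoArrow (α := ℝ)) ⁻¹'
      (Set.Icc (0:ℝ) (2*Real.pi) ×ˢ Set.Icc (0:ℝ) (2*Real.pi)), F (y 0) * G (y 1))
      = ∫ y in (MeasurableEquiv.finTwoArrow (α := ℝ)) ⁻¹'
      (Set.Icc (0:ℝ) (2*Real.pi) ×ˢ Set.Icc (0:ℝ) (2*Real.pi)),
        (fun p : ℝ × ℝ => F p.1 * G p.2) (MeasurableEquiv.finTwoArrow y) from rfl, this]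
  rw [MeasureTheory.Measure.volume_eq_prod ℝ ℝ, MeasureTheory.setIntegral_prod_mul]

lemma key_expFun (sv : Fin 2 → ℕ) (k : Fin 2 → ℤ) (hk : k ∈ Rbox sv) (x : Fin 2 → ℝ) :
    ∫ y in cube 2, expFun k y * vpKd (fun i => 2 ^ sv i) (x - y)
      = (((2*Real.pi)^2 : ℝ) : ℂ) * expFun k x := by
  have hk0 := (Fintype.mem_piFinset.mp hk) 0
  have hk1 := (Fintype.mem_piFinset.mp hk) 1
  rw [Finset.mem_Ioo] at hk0 hk1
  have habs0 : |k 0| < ((2^(sv 0) : ℕ) : ℤ) := by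
    push_cast; exact abs_lt.mpr hk0
  have habs1 : |k 1| < ((2^(sv 1) : ℕ) : ℤ) := by
    push_cast; exact abs_lt.mpr hk1
  have hcubeM : MeasurableSet (cube 2) := measurableSet_Icc
  have hpt : ∀ y ∈ cube 2, expFun k y * vpKd (fun i => 2 ^ sv i) (x - y)
      = (fun t : ℝ => Complex.exp (Complex.I * (k 0) * (t:ℂ)) * vpK (2^(sv 0)) (x 0 - t)) (y 0)
        * (fun t : ℝ => Complex.exp (Complex.I * (k 1) * (t:ℂ)) * vpK (2^(sv 1)) (x 1 - t)) (y 1) := by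
    intro y _
    simp only [expFun, vpKd, Fin.sum_univ_two, Fin.prod_univ_two, Pi.sub_apply]
    rw [mul_add, Complex.exp_add]
    ring_nf
  rw [MeasureTheory.setIntegral_congr_fun hcubeM hpt,
    cube2_integral (fun t : ℝ => Complex.exp (Complex.I * (k 0) * (t:ℂ)) * vpK (2^(sv 0)) (x 0 - t))
      (fun t : ℝ => Complex.exp (Complex.I * (k 1) * (t:ℂ)) * vpK (2^(sv 1)) (x 1 - t)),
    vpK_reproduce _ (pow_pos two_pos _) _ habs0, vpK_reproduce _ (pow_pos two_pos _) _ habs1]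
  simp only [expFun, Fin.sum_univ_two]
  rw [mul_add, Complex.exp_add]
  push_cast
  ring_nf

lemma expFun_continuous {d : ℕ} (k : Fin d → ℤ) : Continuous (expFun k) := by
  unfold expFun; fun_prop

lemma trig_continuous {d : ℕ} {Q : Finset (Fin d → ℤ)} {f : (Fin d → ℝ) → ℂ}
    (hf : f ∈ trigSpace Q) : Continuous f := by
  induction hf using Submodule.span_induction with
  | mem g hg => obtain ⟨k, _, rfl⟩ := hg; exact expFun_continuous k
  | zero => exact continuous_const
  | add a b _ _ ha hb => exact ha.add hb
  | smul c a _ ha => exact ha.const_smul c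

lemma vpK_continuous (j : ℕ) : Continuous (vpK j) := by
  unfold vpK dirichletK
  refine continuous_const.mul (continuous_finset_sum _ fun l _ => continuous_finset_sum _ fun m _ => ?_)
  fun_prop

lemma vpKd_continuous {d : ℕ} (j : Fin d → ℕ) : Continuous (vpKd j) := by
  unfold vpKd
  exact continuous_finset_prod _ fun i _ => (vpK_continuous (j i)).comp (continuous_apply i)

lemma integrableOn_cube {f : (Fin 2 → ℝ) → ℂ} (hf : Continuous f) (j : Fin 2 → ℕ) (x : Fin 2 → ℝ) :
    IntegrableOn (fun y => f y * vpKd j (x - y)) (cube 2) := by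
  refine ContinuousOn.integrableOn_compact isCompact_Icc ?_
  exact (hf.mul ((vpKd_continuous j).comp (continuous_const.sub continuous_id))).continuousOn

lemma part1 (sv : Fin 2 → ℕ) (f : (Fin 2 → ℝ) → ℂ) (hf : f ∈ trigSpace (Rbox sv))
    (x : Fin 2 → ℝ) :
    f x = (((2*Real.pi)^2 : ℝ) : ℂ)⁻¹ * ∫ y in cube 2, f y * vpKd (fun i => 2 ^ sv i) (x - y) := by
  have hc : (((2*Real.pi)^2 : ℝ) : ℂ) ≠ 0 := by
    have := Real.pi_pos
    simp only [ne_eq, Complex.ofReal_eq_zero]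
    positivity
  induction hf using Submodule.span_induction with
  | mem g hg =>
    obtain ⟨k, hk, rfl⟩ := hg
    rw [key_expFun sv k hk x, inv_mul_cancel_left₀ hc]
  | zero => simp
  | add a b ha hb iha ihb =>
    have Ia := integrableOn_cube (trig_continuous ha) (fun i => 2 ^ sv i) x
    have Ib := integrableOn_cube (trig_continuous hb) (fun i => 2 ^ sv i) x
    rw [Pi.add_apply, iha, ihb, ← mul_add, ← MeasureTheory.integral_add Ia Ib]
    congr 1
    exact MeasureTheory.integral_congr_ae (Filter.Eventually.of_forall fun y => by simp [add_mul])
  | smul c a ha iha =>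
    have hint : ∫ y in cube 2, (c • a) y * vpKd (fun i => 2 ^ sv i) (x - y)
        = c • ∫ y in cube 2, a y * vpKd (fun i => 2 ^ sv i) (x - y) := by
      rw [← MeasureTheory.integral_smul]
      exact MeasureTheory.integral_congr_ae
        (Filter.Eventually.of_forall fun y => by simp [mul_assoc])
    rw [Pi.smul_apply, hint, iha, smul_eq_mul, smul_eq_mul]
    ring

lemma g_expand (sv : Fin 2 → ℕ) (k : Fin 2 → ℤ) (x y : Fin 2 → ℝ) :
    expFun k y * vpKd (fun i => 2 ^ sv i) (x - y)
      = ∑ l1 ∈ Finset.Ico (2^(sv 1) : ℕ) (2*2^(sv 1) : ℕ), ∑ m1 ∈ Finset.Icc (-(l1:ℤ)) (l1:ℤ),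
        ∑ l0 ∈ Finset.Ico (2^(sv 0) : ℕ) (2*2^(sv 0) : ℕ), ∑ m0 ∈ Finset.Icc (-(l0:ℤ)) (l0:ℤ),
          (((2^(sv 0) : ℕ) : ℂ)⁻¹ * ((2^(sv 1) : ℕ) : ℂ)⁻¹
            * Complex.exp (Complex.I * m0 * (x 0)) * Complex.exp (Complex.I * m1 * (x 1)))
            * expFun (k - ![m0, m1]) y := by
  simp only [expFun, vpKd, vpK, dirichletK, Fin.prod_univ_two, Fin.sum_univ_two, Pi.sub_apply,
    Matrix.cons_val_zero, Matrix.cons_val_one, Matrix.head_cons, Int.cast_sub,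
    Finset.mul_sum, Finset.sum_mul]
  refine Finset.sum_congr rfl fun l1 _ => Finset.sum_congr rfl fun m1 _ =>
    Finset.sum_congr rfl fun l0 _ => Finset.sum_congr rfl fun m0 _ => ?_
  rw [show Complex.I * (m0:ℂ) * ((x 0 - y 0 : ℝ):ℂ)
        = (Complex.I*m0*((x 0 : ℝ):ℂ)) - (Complex.I*m0*((y 0 : ℝ):ℂ)) by push_cast; ring,
    show Complex.I * (m1:ℂ) * ((x 1 - y 1 : ℝ):ℂ)
        = (Complex.I*m1*((x 1 : ℝ):ℂ)) - (Complex.I*m1*((y 1 : ℝ):ℂ)) by push_cast; ring,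
    show Complex.I * (((k 0 : ℂ) - (m0:ℂ)) * ((y 0 : ℝ):ℂ) + ((k 1 : ℂ) - (m1:ℂ)) * ((y 1 : ℝ):ℂ))
        = Complex.I * ((k 0 : ℂ) * ((y 0 : ℝ):ℂ) + (k 1 : ℂ) * ((y 1 : ℝ):ℂ))
          - (Complex.I*m0*((y 0 : ℝ):ℂ)) - (Complex.I*m1*((y 1 : ℝ):ℂ)) by ring]
  simp only [Complex.exp_sub]
  have h0 : ((2^(sv 0) : ℕ) : ℂ) ≠ 0 := Nat.cast_ne_zero.mpr (Nat.pos_of_ne_zero (by positivity)).ne'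
  have h1 : ((2^(sv 1) : ℕ) : ℂ) ≠ 0 := Nat.cast_ne_zero.mpr (Nat.pos_of_ne_zero (by positivity)).ne'
  field_simp [Complex.exp_ne_zero]

lemma g_mem (sv : Fin 2 → ℕ) (k : Fin 2 → ℤ) (hk : k ∈ Rbox sv) (x : Fin 2 → ℝ) (N : ℕ)
    (hN : 9 * 2^(sv 0 + sv 1) ≤ N) :
    (fun y => expFun k y * vpKd (fun i => 2 ^ sv i) (x - y)) ∈ trigSpace (hyperCross 2 N) := by
  have hk0 := (Fintype.mem_piFinset.mp hk) 0
  have hk1 := (Fintype.mem_piFinset.mp hk) 1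
  rw [Finset.mem_Ioo] at hk0 hk1
  have hfun : (fun y => expFun k y * vpKd (fun i => 2 ^ sv i) (x - y))
      = ∑ l1 ∈ Finset.Ico (2^(sv 1) : ℕ) (2*2^(sv 1) : ℕ), ∑ m1 ∈ Finset.Icc (-(l1:ℤ)) (l1:ℤ),
        ∑ l0 ∈ Finset.Ico (2^(sv 0) : ℕ) (2*2^(sv 0) : ℕ), ∑ m0 ∈ Finset.Icc (-(l0:ℤ)) (l0:ℤ),
          (((2^(sv 0) : ℕ) : ℂ)⁻¹ * ((2^(sv 1) : ℕ) : ℂ)⁻¹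
            * Complex.exp (Complex.I * m0 * (x 0)) * Complex.exp (Complex.I * m1 * (x 1)))
            • expFun (k - ![m0, m1]) := by
    funext y
    simp only [Finset.sum_apply, Pi.smul_apply, smul_eq_mul]
    exact g_expand sv k x y
  rw [hfun]
  refine Submodule.sum_mem _ fun l1 hl1 => Submodule.sum_mem _ fun m1 hm1 =>
    Submodule.sum_mem _ fun l0 hl0 => Submodule.sum_mem _ fun m0 hm0 =>
    Submodule.smul_mem _ _ (Submodule.subset_span (Set.mem_image_of_mem expFun ?_))
  rw [Finset.mem_Ico] at hl0 hl1
  rw [Finset.mem_Icc] at hm0 hm1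
  have hA : (1:ℤ) ≤ 2^(sv 0) := one_le_pow₀ one_le_two
  have hB : (1:ℤ) ≤ 2^(sv 1) := one_le_pow₀ one_le_two
  have hl0z : (l0:ℤ) < 2*2^(sv 0) := by exact_mod_cast hl0.2
  have hl1z : (l1:ℤ) < 2*2^(sv 1) := by exact_mod_cast hl1.2
  have hNz : 9 * (2^(sv 0) * 2^(sv 1)) ≤ (N:ℤ) := by
    have : ((9 * 2^(sv 0 + sv 1) : ℕ) : ℤ) ≤ (N:ℤ) := by exact_mod_cast hN
    rwa [Nat.cast_mul, Nat.cast_pow, pow_add] at this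
  set a : ℤ := k 0 - m0 with ha
  set b : ℤ := k 1 - m1 with hb
  have haabs : |a| ≤ 3*2^(sv 0) - 2 := by
    rw [ha, sub_eq_add_neg]
    refine (abs_add_le _ _).trans ?_
    rw [abs_neg]
    have h1 : |k 0| ≤ 2^(sv 0) - 1 := by rw [abs_le]; omega
    have h2 : |m0| ≤ (l0:ℤ) := by rw [abs_le]; omega
    omega
  have hbabs : |b| ≤ 3*2^(sv 1) - 2 := by
    rw [hb, sub_eq_add_neg]
    refine (abs_add_le _ _).trans ?_
    rw [abs_neg]
    have h1 : |k 1| ≤ 2^(sv 1) - 1 := by rw [abs_le]; omega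
    have h2 : |m1| ≤ (l1:ℤ) := by rw [abs_le]; omega
    omega
  have hma : max |a| 1 ≤ 3*2^(sv 0) - 2 := max_le haabs (by omega)
  have hmb : max |b| 1 ≤ 3*2^(sv 1) - 2 := max_le hbabs (by omega)
  have hprod : max |a| 1 * max |b| 1 ≤ (N:ℤ) := by
    have h1 : max |a| 1 * max |b| 1 ≤ (3*2^(sv 0) - 2) * (3*2^(sv 1) - 2) := by
      have := le_max_right |a| 1
      have := le_max_right |b| 1
      nlinarith [le_max_right |a| (1:ℤ), le_max_right |b| (1:ℤ)]
    nlinarith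
  have haN : |a| ≤ (N:ℤ) := by
    calc |a| ≤ max |a| 1 := le_max_left _ _
    _ ≤ max |a| 1 * max |b| 1 := le_mul_of_one_le_right (le_trans zero_le_one (le_max_right _ _)) (le_max_right _ _)
    _ ≤ (N:ℤ) := hprod
  have hbN : |b| ≤ (N:ℤ) := by
    calc |b| ≤ max |b| 1 := le_max_left _ _
    _ ≤ max |a| 1 * max |b| 1 := le_mul_of_one_le_left (le_trans zero_le_one (le_max_right _ _)) (le_max_right _ _)
    _ ≤ (N:ℤ) := hprod
  have hcv0 : (k - ![m0, m1]) 0 = a := by simp [ha]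
  have hcv1 : (k - ![m0, m1]) 1 = b := by simp [hb]
  rw [Finset.mem_coe, hyperCross, Finset.mem_filter, Fintype.mem_piFinset]
  refine ⟨?_, ?_⟩
  · rw [Fin.forall_fin_two]
    constructor
    · rw [hcv0, Finset.mem_Icc, ← abs_le]; exact haN
    · rw [hcv1, Finset.mem_Icc, ← abs_le]; exact hbN
  · rw [Fin.prod_univ_two, hcv0, hcv1]
    exact hprod

lemma gf_mem (sv : Fin 2 → ℕ) (N : ℕ) (hN : 9 * 2^(sv 0 + sv 1) ≤ N)
    (f : (Fin 2 → ℝ) → ℂ) (hf : f ∈ trigSpace (Rbox sv)) (x : Fin 2 → ℝ) :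
    (fun y => f y * vpKd (fun i => 2 ^ sv i) (x - y)) ∈ trigSpace (hyperCross 2 N) := by
  induction hf using Submodule.span_induction with
  | mem g hg =>
    obtain ⟨k, hk, rfl⟩ := hg
    exact g_mem sv k hk x N hN
  | zero =>
    have : (fun y : Fin 2 → ℝ => (0 : (Fin 2 → ℝ) → ℂ) y * vpKd (fun i => 2 ^ sv i) (x - y))
        = 0 := by funext y; simp
    rw [this]; exact Submodule.zero_mem _
  | add a b _ _ iha ihb =>
    have : (fun y => (a + b) y * vpKd (fun i => 2 ^ sv i) (x - y))
        = (fun y => a y * vpKd (fun i => 2 ^ sv i) (x - y))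
          + (fun y => b y * vpKd (fun i => 2 ^ sv i) (x - y)) := by
      funext y; simp [add_mul]
    rw [this]; exact Submodule.add_mem _ iha ihb
  | smul c a _ iha =>
    have : (fun y => (c • a) y * vpKd (fun i => 2 ^ sv i) (x - y))
        = c • (fun y => a y * vpKd (fun i => 2 ^ sv i) (x - y)) := by
      funext y; simp [mul_assoc]
    rw [this]; exact Submodule.smul_mem _ _ iha

/-- reproducing property (I) of the Fibonacci point set via the de la
Vallée Poussin kernels (Theorem FT1 (I)). -/
theorem stmt8 (γ : ℝ) (hγ : 0 < γ)
    (hcub : ∀ n : ℕ, 2 < n → ∀ N : ℕ, (N : ℝ) ≤ γ * fibb n →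
      ∀ f ∈ trigSpace (hyperCross 2 N),
        (fibb n : ℂ)⁻¹ * ∑ ν ∈ Finset.Icc 1 (fibb n), f (fibPoint n ν) =
          (((2 * Real.pi) ^ 2 : ℝ) : ℂ)⁻¹ * ∫ x in cube 2, f x)
    (n n' : ℕ)
    (hn' : IsGreatest {k : ℕ | (2 : ℝ) ^ k ≤ γ * fibb n / 9} n')
    (s : Fin 2 → ℕ) (hs : (∑ j, s j) ≤ n')
    (f : (Fin 2 → ℝ) → ℂ) (hf : f ∈ trigSpace (Rbox s)) (x : Fin 2 → ℝ) :
    f x = (((2 * Real.pi) ^ 2 : ℝ) : ℂ)⁻¹ *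
        (∫ y in cube 2, f y * vpKd (fun i => 2 ^ s i) (x - y)) ∧
    f x = (fibb n : ℂ)⁻¹ * ∑ ν ∈ Finset.Icc 1 (fibb n),
        f (fibPoint n ν) * vpKd (fun i => 2 ^ s i) (x - fibPoint n ν) := by
  have hpart1 := part1 s f hf x
  refine ⟨hpart1, ?_⟩
  by_cases hn : 2 < n
  · -- main case
    have hs' : s 0 + s 1 ≤ n' := by rwa [Fin.sum_univ_two] at hs
    have hNle : ((9 * 2^n' : ℕ) : ℝ) ≤ γ * fibb n := by
      have h1 := hn'.1
      have : ((9 * 2^n' : ℕ) : ℝ) = 9 * (2:ℝ)^n' := by push_cast; ring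
      rw [this]
      simp only [Set.mem_setOf_eq] at h1
      linarith
    have hNN : 9 * 2^(s 0 + s 1) ≤ 9 * 2^n' :=
      Nat.mul_le_mul_left 9 (Nat.pow_le_pow_right (by norm_num) hs')
    have hgmem := gf_mem s (9 * 2^n') hNN f hf x
    have heval := hcub n hn (9 * 2^n') hNle _ hgmem
    exact hpart1.trans heval.symm
  · -- degenerate case: derive a contradiction
    exfalso
    have h1 := hn'.1
    simp only [Set.mem_setOf_eq] at h1
    have h2 : (1:ℝ) ≤ (2:ℝ)^n' := one_le_pow₀ (by norm_num)
    have h9 : (9:ℝ) ≤ γ * fibb n := by linarith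
    have hfib2 : (fibb n : ℝ) ≤ 2 := by
      interval_cases n <;> norm_num [fibb]
    have hγ2 : (9:ℝ) ≤ γ * 2 := by nlinarith
    have hfib3 : fibb 3 = 3 := by decide
    have h3le : ((3:ℕ) : ℝ) ≤ γ * fibb 3 := by
      rw [hfib3]; push_cast; nlinarith
    have hmem3 : expFun ![(3:ℤ), 0] ∈ trigSpace (hyperCross 2 3) :=
      Submodule.subset_span (Set.mem_image_of_mem expFun (by decide))
    have heval := hcub 3 (by norm_num) 3 h3le _ hmem3
    have hint0 : ∫ y in cube 2, expFun ![(3:ℤ), 0] y = 0 := by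
      have hpt : ∀ y ∈ cube 2, expFun ![(3:ℤ), 0] y
          = (fun t : ℝ => Complex.exp (Complex.I * ((3:ℤ):ℂ) * (t:ℂ))) (y 0)
            * (fun t : ℝ => Complex.exp (Complex.I * ((0:ℤ):ℂ) * (t:ℂ))) (y 1) := by
        intro y _
        simp only [expFun, Fin.sum_univ_two, Matrix.cons_val_zero, Matrix.cons_val_one,
          Matrix.head_cons]
        rw [mul_add, Complex.exp_add]
        ring_nf
      have hcubeM : MeasurableSet (cube 2) := measurableSet_Icc
      rw [MeasureTheory.setIntegral_congr_fun hcubeM hpt,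
        cube2_integral (fun t : ℝ => Complex.exp (Complex.I * ((3:ℤ):ℂ) * (t:ℂ)))
          (fun t : ℝ => Complex.exp (Complex.I * ((0:ℤ):ℂ) * (t:ℂ))),
        integral_exp_Icc, integral_exp_Icc]
      norm_num
    rw [hint0, mul_zero] at heval
    have hterm : ∀ ν : ℕ, expFun ![(3:ℤ), 0] (fibPoint 3 ν) = 1 := by
      intro ν
      simp only [expFun, fibPoint, Fin.sum_univ_two, Matrix.cons_val_zero, Matrix.cons_val_one,
        Matrix.head_cons]
      rw [show Complex.I * (((3:ℤ):ℂ) * ((2 * Real.pi * ν / (fibb 3 : ℝ) : ℝ) : ℂ)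
            + ((0:ℤ):ℂ) * ((2 * Real.pi * Int.fract ((↑(ν * fibb (3-1)) : ℝ) / fibb 3) : ℝ) : ℂ))
          = ((ν:ℤ):ℂ) * (2 * (Real.pi:ℂ) * Complex.I) by
        rw [hfib3]; push_cast; field_simp; ring]
      exact Complex.exp_int_mul_two_pi_mul_I ν
    rw [hfib3] at heval
    rw [show (Finset.Icc 1 3 : Finset ℕ) = {1, 2, 3} from by decide] at heval
    simp only [Finset.sum_insert, Finset.mem_insert, Finset.sum_singleton, hterm] at heval
    norm_num at heval
end
end

section
/- Let γ > 0 be such that for all n > 2 and all N ≤ γ·b_n the Fibonacci cubature formula b_n^{−1} Σ_{ν=1}^{b_n} f(y^ν) equals (2π)^{−2} ∫_{𝕋²} f dx for every f ∈ 𝒯(Γ(N,2)). For a given n, let n' ∈ ℕ be the largest natural number satisfying 2^{n'} ≤ γ·b_n/9. Then for any s = (s_1,s_2) ∈ ℤ_+² with s_1 + s_2 ≤ n' and any complex numbers a_1,…,a_{b_n}: ‖b_n^{−1} Σ_{ν=1}^{b_n} a_ν |𝒱_{2^s}(· − y^ν)|‖_∞ ≤ 9·max_{1≤ν≤b_n}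 |a_ν|. -/
noncomputable section
open scoped BigOperators
open MeasureTheory

/-- Partial exponential sum `E_m(t) = ∑_{k<m} e^{ikt}`. -/
def stmt9Ek (m : ℕ) (t : ℝ) : ℂ := ∑ k ∈ Finset.range m, Complex.exp (Complex.I * k * t)

lemma stmt9_sum_Icc_one (f : ℤ → ℂ) (m : ℕ) :
    ∑ k ∈ Finset.Icc (1:ℤ) m, f k = ∑ q ∈ Finset.range m, f ((m:ℤ) - q) := by
  refine Finset.sum_nbij' (fun k => ((m:ℤ) - k).toNat) (fun q => (m:ℤ) - q) ?_ ?_ ?_ ?_ ?_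
  · intro a ha; simp only [Finset.mem_Icc] at ha; simp only [Finset.mem_range]; omega
  · intro b hb; simp only [Finset.mem_range] at hb; simp only [Finset.mem_Icc]; omega
  · intro a ha; simp only [Finset.mem_Icc] at ha; omega
  · intro b hb; simp only [Finset.mem_range] at hb; omega
  · intro a ha; simp only [Finset.mem_Icc] at ha; congr 1; omega

lemma stmt9_sum_Icc_neg (f : ℤ → ℂ) (m : ℕ) :
    ∑ k ∈ Finset.Icc (-(m:ℤ)) (-1), f k = ∑ p ∈ Finset.range m, f ((p:ℤ) - m) := by
  refine Finset.sum_nbij' (fun k => (k + (m:ℤ)).toNat) (fun p => (p:ℤ) - m) ?_ ?_ ?_ ?_ ?_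
  · intro a ha; simp only [Finset.mem_Icc] at ha; simp only [Finset.mem_range]; omega
  · intro b hb; simp only [Finset.mem_range] at hb; simp only [Finset.mem_Icc]; omega
  · intro a ha; simp only [Finset.mem_Icc] at ha; omega
  · intro b hb; simp only [Finset.mem_range] at hb; omega
  · intro a ha; simp only [Finset.mem_Icc] at ha; congr 1; omega

lemma stmt9_dirichlet_split (m : ℕ) (x : ℝ) :
    dirichletK m x = (∑ p ∈ Finset.range m, Complex.exp (Complex.I * ((p:ℤ) - m) * x)) + 1
      + ∑ q ∈ Finset.range m, Complex.exp (Complex.I * ((m:ℤ) - q) * x) := by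
  rw [dirichletK]
  have hsplit : Finset.Icc (-(m:ℤ)) m = (Finset.Icc (-(m:ℤ)) (-1) ∪ Finset.Icc (0:ℤ) m) := by
    ext k; simp only [Finset.mem_Icc, Finset.mem_union]; omega
  have hdisj : Disjoint (Finset.Icc (-(m:ℤ)) (-1)) (Finset.Icc (0:ℤ) m) := by
    rw [Finset.disjoint_left]; intro k h1 h2
    simp only [Finset.mem_Icc] at h1 h2; omega
  have h0 : Finset.Icc (0:ℤ) m = insert (0:ℤ) (Finset.Icc (1:ℤ) m) := by
    ext k; simp only [Finset.mem_Icc, Finset.mem_insert]; omega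
  rw [hsplit, Finset.sum_union hdisj, h0, Finset.sum_insert (by simp)]
  rw [stmt9_sum_Icc_neg (fun k => Complex.exp (Complex.I * k * x)) m,
    stmt9_sum_Icc_one (fun k => Complex.exp (Complex.I * k * x)) m]
  push_cast
  simp [mul_comm]
  ring

lemma stmt9_conjEk (m : ℕ) (x : ℝ) :
    (starRingEnd ℂ) (stmt9Ek m x) = ∑ q ∈ Finset.range m, Complex.exp (-(Complex.I * q * x)) := by
  rw [stmt9Ek, map_sum]
  refine Finset.sum_congr rfl fun q _ => ?_
  rw [← Complex.exp_conj]; congr 1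
  simp [Complex.ext_iff]

lemma stmt9_L0 (m : ℕ) (x : ℝ) :
    ∑ l ∈ Finset.range m, dirichletK l x = stmt9Ek m x * (starRingEnd ℂ) (stmt9Ek m x) := by
  induction m with
  | zero => simp [stmt9Ek]
  | succ m ih =>
    have hE : stmt9Ek (m+1) x = stmt9Ek m x + Complex.exp (Complex.I * m * x) :=
      Finset.sum_range_succ _ m
    have hconj1 : (starRingEnd ℂ) (Complex.exp (Complex.I * m * x))
        = Complex.exp (-(Complex.I * m * x)) := by
      rw [← Complex.exp_conj]; congr 1; simp [Complex.ext_iff]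
    have key : dirichletK m x =
        Complex.exp (Complex.I * m * x) * (starRingEnd ℂ) (stmt9Ek m x)
        + stmt9Ek m x * (starRingEnd ℂ) (Complex.exp (Complex.I * m * x))
        + Complex.exp (Complex.I * m * x) * (starRingEnd ℂ) (Complex.exp (Complex.I * m * x)) := by
      rw [stmt9_dirichlet_split, stmt9_conjEk, hconj1, Finset.mul_sum]
      rw [stmt9Ek, Finset.sum_mul]
      have e1 : ∀ q ∈ Finset.range m,
          Complex.exp (Complex.I * m * x) * Complex.exp (-(Complex.I * q * x))
          = Complex.exp (Complex.I * ((m:ℤ) - q) * x) := by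
        intro q _; rw [← Complex.exp_add]; congr 1; push_cast; ring
      have e2 : ∀ p ∈ Finset.range m,
          Complex.exp (Complex.I * p * x) * Complex.exp (-(Complex.I * m * x))
          = Complex.exp (Complex.I * ((p:ℤ) - m) * x) := by
        intro p _; rw [← Complex.exp_add]; congr 1; push_cast; ring
      have e3 : Complex.exp (Complex.I * m * x) * Complex.exp (-(Complex.I * m * x)) = 1 := by
        rw [← Complex.exp_add]; simp
      rw [Finset.sum_congr rfl e1, Finset.sum_congr rfl e2, e3]
      ring
    rw [Finset.sum_range_succ, ih, hE, map_add, key]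
    ring

lemma stmt9_L1 (j : ℕ) (t : ℝ) :
    vpK j t = (j : ℂ)⁻¹ * (stmt9Ek (2*j) t * (starRingEnd ℂ) (stmt9Ek (2*j) t)
      - stmt9Ek j t * (starRingEnd ℂ) (stmt9Ek j t)) := by
  rw [vpK, ← stmt9_L0, ← stmt9_L0, ← Finset.sum_Ico_eq_sub _ (by omega : j ≤ 2*j)]

lemma stmt9_L2 (j : ℕ) (t : ℝ) :
    ‖vpK j t‖ ≤ (j : ℝ)⁻¹ * (Complex.normSq (stmt9Ek (2*j) t)
      + Complex.normSq (stmt9Ek j t)) := by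
  rw [stmt9_L1, norm_mul, Complex.mul_conj, Complex.mul_conj]
  rw [norm_inv, Complex.norm_natCast]
  refine mul_le_mul_of_nonneg_left ?_ (by positivity)
  rw [← Complex.ofReal_sub, Complex.norm_real, Real.norm_eq_abs]
  have h1 : (0:ℝ) ≤ Complex.normSq (stmt9Ek (2*j) t) := Complex.normSq_nonneg _
  have h2 : (0:ℝ) ≤ Complex.normSq (stmt9Ek j t) := Complex.normSq_nonneg _
  rw [abs_le]; constructor <;> nlinarith

lemma stmt9_LnormSq (m : ℕ) (u : ℝ) :
    ((Complex.normSq (stmt9Ek m u) : ℝ) : ℂ)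
      = ∑ p ∈ Finset.range m, ∑ q ∈ Finset.range m,
          Complex.exp (Complex.I * ((p:ℤ) - (q:ℤ)) * u) := by
  rw [← Complex.mul_conj, stmt9_conjEk, stmt9Ek, Finset.sum_mul]
  refine Finset.sum_congr rfl fun p _ => ?_
  rw [Finset.mul_sum]
  refine Finset.sum_congr rfl fun q _ => ?_
  rw [← Complex.exp_add]; congr 1; push_cast; ring

lemma stmt9_lint1 (k : ℤ) : ∫ t in Set.Icc (0:ℝ) (2*Real.pi), Complex.exp (Complex.I * k * t)
    = if k = 0 then ((2*Real.pi : ℝ) : ℂ) else 0 := by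
  rw [MeasureTheory.integral_Icc_eq_integral_Ioc,
    ← intervalIntegral.integral_of_le (by positivity : (0:ℝ) ≤ 2*Real.pi)]
  rcases eq_or_ne k 0 with hk | hk
  · simp [hk]
  · rw [if_neg hk]
    have h1 : (fun t : ℝ => Complex.exp (Complex.I * k * t))
        = fun t : ℝ => Complex.exp ((Complex.I * k) * t) := by
      funext t; ring_nf
    rw [intervalIntegral.integral_congr (fun t _ => congrFun h1 t),
      integral_exp_mul_complex (by simp [Complex.ext_iff, hk] : (Complex.I * (k:ℂ)) ≠ 0)]
    have h2 : Complex.I * (k:ℂ) * ((2*Real.pi : ℝ) : ℂ) = (k : ℂ) * (2*Real.pi*Complex.I) := by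
      push_cast; ring
    rw [h2, Complex.exp_int_mul_two_pi_mul_I]
    simp

lemma stmt9_cube_eq (d : ℕ) :
    cube d = Set.pi Set.univ (fun _ : Fin d => Set.Icc (0:ℝ) (2*Real.pi)) := by
  rw [cube, ← Set.pi_univ_Icc]; rfl

lemma stmt9_lint2 (g : Fin 2 → ℝ → ℂ) :
    ∫ y in cube 2, ∏ i, g i (y i) = ∏ i, ∫ t in Set.Icc (0:ℝ) (2*Real.pi), g i t := by
  have hmeas : MeasurableSet (cube 2) := measurableSet_Icc
  rw [← MeasureTheory.integral_indicator hmeas]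
  have h : (cube 2).indicator (fun y => ∏ i, g i (y i))
      = fun y => ∏ i, (Set.Icc (0:ℝ) (2*Real.pi)).indicator (g i) (y i) := by
    funext y
    by_cases hy : y ∈ cube 2
    · rw [Set.indicator_of_mem hy]
      rw [stmt9_cube_eq] at hy
      exact (Finset.prod_congr rfl fun i _ =>
        (Set.indicator_of_mem (hy i (Set.mem_univ i)) _).symm)
    · rw [Set.indicator_of_notMem hy]
      rw [stmt9_cube_eq] at hy
      simp only [Set.mem_pi, Set.mem_univ, forall_true_left, not_forall] at hy
      obtain ⟨i, hi⟩ := hy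
      refine (Finset.prod_eq_zero (Finset.mem_univ i) ?_).symm
      simp [Set.indicator_of_notMem, hi]
  rw [h]
  refine (MeasureTheory.integral_fintype_prod_eq_prod
    (fun i => (Set.Icc (0:ℝ) (2*Real.pi)).indicator (g i)) (μ := fun _ => volume)).trans ?_
  exact Finset.prod_congr rfl fun i _ => MeasureTheory.integral_indicator measurableSet_Icc

lemma stmt9_lintExp (k : Fin 2 → ℤ) :
    ∫ y in cube 2, expFun k y
      = (if k 0 = 0 then ((2*Real.pi:ℝ):ℂ) else 0) * (if k 1 = 0 then ((2*Real.pi:ℝ):ℂ) else 0) := by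
  have h : ∀ y : Fin 2 → ℝ, expFun k y = ∏ i, Complex.exp (Complex.I * (k i) * (y i)) := by
    intro y
    rw [expFun, Fin.sum_univ_two, Fin.prod_univ_two, ← Complex.exp_add]
    congr 1; ring
  calc ∫ y in cube 2, expFun k y
      = ∫ y in cube 2, ∏ i, Complex.exp (Complex.I * (k i) * (y i)) :=
        MeasureTheory.setIntegral_congr_fun
          (show MeasurableSet (cube 2) from measurableSet_Icc) (fun y _ => h y)
    _ = _ := by
        rw [stmt9_lint2 (fun i t => Complex.exp (Complex.I * (k i) * t)),
          Fin.prod_univ_two, stmt9_lint1, stmt9_lint1]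

/-- Index set for the expansion of `|E_{2m}|² + |E_m|²`. -/
def stmt9T (m : ℕ) : Finset ((ℕ × ℕ) ⊕ (ℕ × ℕ)) :=
  (Finset.range (2*m) ×ˢ Finset.range (2*m)).disjSum (Finset.range m ×ˢ Finset.range m)

def stmt9d : (ℕ × ℕ) ⊕ (ℕ × ℕ) → ℤ :=
  Sum.elim (fun pq => (pq.1 : ℤ) - pq.2) (fun pq => (pq.1 : ℤ) - pq.2)

lemma stmt9_Lsum (m : ℕ) (u : ℝ) :
    ((Complex.normSq (stmt9Ek (2*m) u) + Complex.normSq (stmt9Ek m u) : ℝ) : ℂ)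
      = ∑ z ∈ stmt9T m, Complex.exp (Complex.I * (stmt9d z) * u) := by
  rw [Complex.ofReal_add, stmt9_LnormSq, stmt9_LnormSq, stmt9T, Finset.sum_disjSum]
  congr 1 <;>
  · rw [Finset.sum_product]
    refine Finset.sum_congr rfl fun p _ => Finset.sum_congr rfl fun q _ => ?_
    congr 1
    simp only [stmt9d, Sum.elim_inl, Sum.elim_inr]
    push_cast; ring

lemma stmt9_Labs (m : ℕ) (z : (ℕ × ℕ) ⊕ (ℕ × ℕ)) (hz : z ∈ stmt9T m) :
    |stmt9d z| ≤ 2*(m:ℤ) - 1 := by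
  match z with
  | Sum.inl pq =>
    simp only [stmt9T, Finset.inl_mem_disjSum, Finset.mem_product, Finset.mem_range] at hz
    simp only [stmt9d, Sum.elim_inl]; rw [abs_le]; omega
  | Sum.inr pq =>
    simp only [stmt9T, Finset.inr_mem_disjSum, Finset.mem_product, Finset.mem_range] at hz
    simp only [stmt9d, Sum.elim_inr]; rw [abs_le]; omega

lemma stmt9_Lcount (m : ℕ) :
    ∑ z ∈ stmt9T m, (if stmt9d z = 0 then (1:ℂ) else 0) = ((3*m : ℕ) : ℂ) := by
  rw [stmt9T, Finset.sum_disjSum]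
  have key : ∀ M : ℕ, ∑ pq ∈ Finset.range M ×ˢ Finset.range M,
      (if ((pq.1 : ℤ) - pq.2 = 0) then (1:ℂ) else 0) = (M : ℂ) := by
    intro M
    rw [Finset.sum_product]
    have h1 : ∀ p ∈ Finset.range M,
        ∑ q ∈ Finset.range M, (if ((p : ℤ) - q = 0) then (1:ℂ) else 0) = 1 := by
      intro p hp
      have h2 : ∀ q ∈ Finset.range M,
          (if ((p : ℤ) - q = 0) then (1:ℂ) else 0) = if q = p then (1:ℂ) else 0 := by
        intro q _; congr 1
        simp only [sub_eq_zero, eq_iff_iff, Int.natCast_inj]; omega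
      rw [Finset.sum_congr rfl h2, Finset.sum_ite_eq' (Finset.range M) p (fun _ => (1:ℂ))]
      simp [hp]
    rw [Finset.sum_congr rfl h1]
    simp
  have e1 : ∀ pq ∈ Finset.range (2*m) ×ˢ Finset.range (2*m),
      (if stmt9d (Sum.inl pq) = 0 then (1:ℂ) else 0)
        = if ((pq.1 : ℤ) - pq.2 = 0) then (1:ℂ) else 0 := fun pq _ => rfl
  have e2 : ∀ pq ∈ Finset.range m ×ˢ Finset.range m,
      (if stmt9d (Sum.inr pq) = 0 then (1:ℂ) else 0)
        = if ((pq.1 : ℤ) - pq.2 = 0) then (1:ℂ) else 0 := fun pq _ => rfl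
  rw [Finset.sum_congr rfl e1, Finset.sum_congr rfl e2, key, key]
  push_cast; ring

lemma stmt9_fibb_pos (n : ℕ) : 0 < fibb n := by
  induction n using Nat.strong_induction_on with
  | _ n ih =>
    match n with
    | 0 => simp [fibb]
    | 1 => simp [fibb]
    | (m+2) => rw [fibb]; have := ih (m+1) (by omega); omega

set_option maxHeartbeats 2000000 in
/-- property (II) of the Fibonacci point set, a uniform bound for sums of
absolute values of shifted de la Vallée Poussin kernels (Theorem FT1 (II)). -/
theorem stmt9 (γ : ℝ) (hγ : 0 < γ)
    (hcub : ∀ n : ℕ, 2 < n → ∀ N : ℕ, (N : ℝ) ≤ γ * fibb n →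
      ∀ f ∈ trigSpace (hyperCross 2 N),
        (fibb n : ℂ)⁻¹ * ∑ ν ∈ Finset.Icc 1 (fibb n), f (fibPoint n ν) =
          (((2 * Real.pi) ^ 2 : ℝ) : ℂ)⁻¹ * ∫ x in cube 2, f x)
    (n n' : ℕ)
    (hn' : IsGreatest {k : ℕ | (2 : ℝ) ^ k ≤ γ * fibb n / 9} n')
    (s : Fin 2 → ℕ) (hs : (∑ j, s j) ≤ n')
    (a : Fin (fibb n) → ℂ) :
    unifNorm (fun x => (fibb n : ℂ)⁻¹ * ∑ ν : Fin (fibb n),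
        a ν * (‖vpKd (fun i => 2 ^ s i) (x - fibPoint n ((ν : ℕ) + 1))‖ : ℂ)) ≤
      9 * ⨆ ν : Fin (fibb n), ‖a ν‖ := by
  have hπ : (0:ℝ) < Real.pi := Real.pi_pos
  have h2n' : (2:ℝ) ^ n' ≤ γ * fibb n / 9 := hn'.1
  have h1 : (1:ℝ) ≤ 2 ^ n' := one_le_pow₀ (by norm_num)
  have h9 : (9:ℝ) ≤ γ * fibb n := by nlinarith
  rcases le_or_gt n 2 with hn2 | hn3
  · exfalso
    have hfb : (fibb n : ℝ) ≤ 2 := by interval_cases n <;> norm_num [fibb]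
    have hγ2 : (9:ℝ)/2 ≤ γ := by nlinarith
    have hf3 : fibb 3 = 3 := rfl
    have h3 : ((3:ℕ) : ℝ) ≤ γ * fibb 3 := by rw [hf3]; push_cast; nlinarith
    have hmem : expFun ![3,0] ∈ trigSpace (hyperCross 2 3) := by
      apply Submodule.subset_span
      refine ⟨![3,0], ?_, rfl⟩
      rw [Finset.mem_coe, hyperCross, Finset.mem_filter]
      constructor
      · rw [Fintype.mem_piFinset]
        intro i
        fin_cases i <;> simp
      · rw [Fin.prod_univ_two]
        norm_num
    have hkey := hcub 3 (by norm_num) 3 h3 (expFun ![3,0]) hmem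
    have hval : ∀ ν : ℕ, expFun ![3,0] (fibPoint 3 ν) = 1 := by
      intro ν
      rw [expFun, Fin.sum_univ_two]
      have harg : Complex.I * ((((3:ℤ)) : ℂ) * ((fibPoint 3 ν 0 : ℝ) : ℂ)
          + (((0:ℤ)) : ℂ) * ((fibPoint 3 ν 1 : ℝ) : ℂ)) = ((ν : ℤ) : ℂ) * (2*Real.pi*Complex.I) := by
        have h0 : fibPoint 3 ν 0 = 2 * Real.pi * ν / 3 := by
          rw [fibPoint]
          simp [hf3]
        rw [h0]
        push_cast
        ring
      have : ((3:ℤ):ℂ) = ((![3,0] : Fin 2 → ℤ) 0 : ℂ) := by norm_num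
      rw [show ((![(3:ℤ),0] : Fin 2 → ℤ) 0 : ℂ) = ((3:ℤ):ℂ) by norm_num,
        show ((![(3:ℤ),0] : Fin 2 → ℤ) 1 : ℂ) = ((0:ℤ):ℂ) by norm_num, harg,
        Complex.exp_int_mul_two_pi_mul_I]
    rw [Finset.sum_congr rfl (fun ν _ => hval ν), Finset.sum_const, Nat.card_Icc] at hkey
    rw [stmt9_lintExp] at hkey
    have hk0 : (![(3:ℤ),0] : Fin 2 → ℤ) 0 = 3 := rfl
    rw [hk0] at hkey
    norm_num [fibb] at hkey
  · -- main case : 2 < n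
    have hbpos : 0 < fibb n := stmt9_fibb_pos n
    haveI hne : Nonempty (Fin (fibb n)) := ⟨⟨0, hbpos⟩⟩
    have hbdd : BddAbove (Set.range fun ν : Fin (fibb n) => ‖a ν‖) :=
      (Set.finite_range _).bddAbove
    set M := ⨆ ν : Fin (fibb n), ‖a ν‖ with hMdef
    have hMle : ∀ ν : Fin (fibb n), ‖a ν‖ ≤ M := fun ν => le_ciSup hbdd ν
    have hM0 : 0 ≤ M := le_trans (norm_nonneg _) (hMle ⟨0, hbpos⟩)
    have hss : s 0 + s 1 ≤ n' := by rw [Fin.sum_univ_two] at hs; exact hs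
    set jj : Fin 2 → ℕ := fun i => 2 ^ s i with hjj
    have hjpos : ∀ i, 0 < jj i := fun i => pow_pos (by norm_num) _
    set N : ℕ := 2 ^ (s 0 + 1) * 2 ^ (s 1 + 1) with hN
    have hNle : (N : ℝ) ≤ γ * fibb n := by
      have h2 : (2:ℝ) ^ (s 0 + s 1) ≤ 2 ^ n' := pow_le_pow_right₀ one_le_two hss
      have hNval : (N:ℝ) = 4 * 2 ^ (s 0 + s 1) := by
        rw [hN]; push_cast; rw [pow_succ, pow_succ, pow_add]; ring
      nlinarith
    rw [unifNorm]
    haveI hcne : Nonempty (cube 2) := ⟨⟨0, Set.mem_Icc.mpr ⟨le_rfl, fun i => by positivity⟩⟩⟩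
    refine ciSup_le ?_
    rintro ⟨x, hx⟩
    dsimp only
    -- local definitions depending on x
    set Rf : (Fin 2 → ℝ) → ℝ := fun y => ∏ i, ((jj i : ℝ))⁻¹ *
      (Complex.normSq (stmt9Ek (2 * jj i) (x i - y i)) +
       Complex.normSq (stmt9Ek (jj i) (x i - y i))) with hRf
    set Fx : (Fin 2 → ℝ) → ℂ := fun y => ((Rf y : ℝ) : ℂ) with hFxdef
    have hRpos : ∀ y, 0 ≤ Rf y := by
      intro y; rw [hRf]
      exact Finset.prod_nonneg fun i _ => mul_nonneg (by positivity)
        (add_nonneg (Complex.normSq_nonneg _) (Complex.normSq_nonneg _))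
    have hcoord : ∀ (i : Fin 2) (t : ℝ),
        ((((jj i : ℝ))⁻¹ * (Complex.normSq (stmt9Ek (2 * jj i) (x i - t)) +
          Complex.normSq (stmt9Ek (jj i) (x i - t))) : ℝ) : ℂ)
        = ((jj i : ℂ))⁻¹ * ∑ z ∈ stmt9T (jj i),
            Complex.exp (Complex.I * (stmt9d z) * ((x i - t : ℝ) : ℂ)) := by
      intro i t
      rw [Complex.ofReal_mul, Complex.ofReal_inv, Complex.ofReal_natCast, stmt9_Lsum]
    have hFxy : ∀ y : Fin 2 → ℝ, Fx y = ∏ i, (((jj i : ℂ))⁻¹ * ∑ z ∈ stmt9T (jj i),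
        Complex.exp (Complex.I * (stmt9d z) * ((x i - y i : ℝ) : ℂ))) := by
      intro y
      simp only [hFxdef, hRf]
      rw [Complex.ofReal_prod]
      exact Finset.prod_congr rfl fun i _ => hcoord i (y i)
    -- hyperCross membership of the frequencies
    have hkmem : ∀ z ∈ stmt9T (jj 0) ×ˢ stmt9T (jj 1),
        (![-(stmt9d z.1), -(stmt9d z.2)] : Fin 2 → ℤ) ∈ hyperCross 2 N := by
      rintro ⟨z1, z2⟩ hz
      rw [Finset.mem_product] at hz
      have hd1 := stmt9_Labs _ _ hz.1
      have hd2 := stmt9_Labs _ _ hz.2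
      have hZ0 : (1:ℤ) ≤ (jj 0 : ℤ) := by exact_mod_cast hjpos 0
      have hZ1 : (1:ℤ) ≤ (jj 1 : ℤ) := by exact_mod_cast hjpos 1
      have hNZ : (N : ℤ) = 4 * ((jj 0 : ℤ) * (jj 1 : ℤ)) := by
        rw [hN, hjj]; push_cast; rw [pow_succ, pow_succ]; ring
      have hp1 : 2*(jj 0:ℤ)*(jj 1:ℤ) ≥ 2*(jj 0:ℤ) := by nlinarith
      have hp2 : 2*(jj 0:ℤ)*(jj 1:ℤ) ≥ 2*(jj 1:ℤ) := by nlinarith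
      have hNbig0 : 2*(jj 0:ℤ) - 1 ≤ (N:ℤ) := by rw [hNZ]; nlinarith
      have hNbig1 : 2*(jj 1:ℤ) - 1 ≤ (N:ℤ) := by rw [hNZ]; nlinarith
      rw [hyperCross, Finset.mem_filter]
      refine ⟨?_, ?_⟩
      · rw [Fintype.mem_piFinset, Fin.forall_fin_two]
        constructor
        · simp only [Matrix.cons_val_zero, Finset.mem_Icc]
          rw [abs_le] at hd1
          constructor <;> linarith
        · simp only [Matrix.cons_val_one, Matrix.head_cons, Matrix.cons_val_zero, Finset.mem_Icc]
          rw [abs_le] at hd2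
          constructor <;> linarith
      · rw [Fin.prod_univ_two]
        simp only [Matrix.cons_val_zero, Matrix.cons_val_one, Matrix.head_cons, abs_neg]
        have hm1 : max |stmt9d z1| 1 ≤ 2*(jj 0:ℤ) - 1 := max_le hd1 (by linarith)
        have hm2 : max |stmt9d z2| 1 ≤ 2*(jj 1:ℤ) - 1 := max_le hd2 (by linarith)
        have h01 : (0:ℤ) ≤ max |stmt9d z1| 1 := le_trans zero_le_one (le_max_right _ _)
        have h02 : (0:ℤ) ≤ max |stmt9d z2| 1 := le_trans zero_le_one (le_max_right _ _)
        calc max |stmt9d z1| 1 * max |stmt9d z2| 1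
            ≤ (2*(jj 0:ℤ) - 1) * (2*(jj 1:ℤ) - 1) := mul_le_mul hm1 hm2 h02 (by linarith)
          _ ≤ (N:ℤ) := by rw [hNZ]; nlinarith
    -- expansion of Fx as a trigonometric polynomial
    have hFxsum : Fx = ∑ z ∈ stmt9T (jj 0) ×ˢ stmt9T (jj 1),
        (((jj 0 : ℂ))⁻¹ * ((jj 1 : ℂ))⁻¹
          * Complex.exp (Complex.I * (stmt9d z.1) * ((x 0 : ℝ) : ℂ))
          * Complex.exp (Complex.I * (stmt9d z.2) * ((x 1 : ℝ) : ℂ)))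
          • expFun ![-(stmt9d z.1), -(stmt9d z.2)] := by
      funext y
      rw [Finset.sum_apply]
      rw [hFxy y, Fin.prod_univ_two, Finset.mul_sum, Finset.mul_sum, Finset.sum_mul_sum]
      rw [Finset.sum_product]
      refine Finset.sum_congr rfl fun z1 _ => Finset.sum_congr rfl fun z2 _ => ?_
      simp only [Pi.smul_apply, smul_eq_mul]
      rw [expFun, Fin.sum_univ_two]
      simp only [Matrix.cons_val_zero, Matrix.cons_val_one, Matrix.head_cons]
      rw [show Complex.I * ((((-(stmt9d z1) : ℤ)) : ℂ) * ((y 0 : ℝ) : ℂ)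
            + (((-(stmt9d z2) : ℤ)) : ℂ) * ((y 1 : ℝ) : ℂ))
          = (-(Complex.I * (stmt9d z1) * ((y 0 : ℝ) : ℂ)))
            + (-(Complex.I * (stmt9d z2) * ((y 1 : ℝ) : ℂ))) from by push_cast; ring]
      rw [Complex.exp_add]
      rw [show Complex.I * (stmt9d z1) * ((x 0 - y 0 : ℝ) : ℂ)
          = Complex.I * (stmt9d z1) * ((x 0 : ℝ) : ℂ)
            + (-(Complex.I * (stmt9d z1) * ((y 0 : ℝ) : ℂ))) from by push_cast; ring]
      rw [show Complex.I * (stmt9d z2) * ((x 1 - y 1 : ℝ) : ℂ)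
          = Complex.I * (stmt9d z2) * ((x 1 : ℝ) : ℂ)
            + (-(Complex.I * (stmt9d z2) * ((y 1 : ℝ) : ℂ))) from by push_cast; ring]
      rw [Complex.exp_add, Complex.exp_add]
      ring
    have hmemFx : Fx ∈ trigSpace (hyperCross 2 N) := by
      rw [hFxsum]
      exact Submodule.sum_mem _ fun z hz => Submodule.smul_mem _ _
        (Submodule.subset_span ⟨_, Finset.mem_coe.mpr (hkmem z hz), rfl⟩)
    -- the integral of Fx over the cube
    have hIcoord : ∀ i : Fin 2, (∫ t in Set.Icc (0:ℝ) (2*Real.pi),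
        ((((jj i : ℝ))⁻¹ * (Complex.normSq (stmt9Ek (2 * jj i) (x i - t)) +
          Complex.normSq (stmt9Ek (jj i) (x i - t))) : ℝ) : ℂ))
        = 3 * ((2*Real.pi : ℝ) : ℂ) := by
      intro i
      have hcongr : ∀ t ∈ Set.Icc (0:ℝ) (2*Real.pi),
          ((((jj i : ℝ))⁻¹ * (Complex.normSq (stmt9Ek (2 * jj i) (x i - t)) +
            Complex.normSq (stmt9Ek (jj i) (x i - t))) : ℝ) : ℂ)
          = ((jj i : ℂ))⁻¹ * ∑ z ∈ stmt9T (jj i),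
              Complex.exp (Complex.I * (stmt9d z) * ((x i : ℝ) : ℂ))
                * Complex.exp (Complex.I * ((-(stmt9d z) : ℤ) : ℂ) * (t : ℂ)) := by
        intro t _
        rw [hcoord i t]
        congr 1
        refine Finset.sum_congr rfl fun z _ => ?_
        rw [← Complex.exp_add]; congr 1; push_cast; ring
      rw [MeasureTheory.setIntegral_congr_fun measurableSet_Icc hcongr,
        MeasureTheory.integral_const_mul,
        MeasureTheory.integral_finset_sum _ (fun z _ => Continuous.integrableOn_Icc (by
          exact continuous_const.mul (Complex.continuous_exp.comp
            (continuous_const.mul Complex.continuous_ofReal))))]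
      have hterm : ∀ z ∈ stmt9T (jj i), (∫ t in Set.Icc (0:ℝ) (2*Real.pi),
          Complex.exp (Complex.I * (stmt9d z) * ((x i : ℝ) : ℂ))
            * Complex.exp (Complex.I * ((-(stmt9d z) : ℤ) : ℂ) * (t : ℂ)))
          = if stmt9d z = 0 then ((2*Real.pi : ℝ) : ℂ) else 0 := by
        intro z _
        rw [MeasureTheory.integral_const_mul, stmt9_lint1]
        rcases eq_or_ne (stmt9d z) 0 with h | h
        · simp [h]
        · simp [h, neg_eq_zero]
      rw [Finset.sum_congr rfl hterm]
      have hpull : ∑ z ∈ stmt9T (jj i), (if stmt9d z = 0 then ((2*Real.pi : ℝ) : ℂ) else 0)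
          = ((2*Real.pi : ℝ) : ℂ) * ∑ z ∈ stmt9T (jj i), (if stmt9d z = 0 then (1:ℂ) else 0) := by
        rw [Finset.mul_sum]
        exact Finset.sum_congr rfl fun z _ => by split <;> simp
      rw [hpull, stmt9_Lcount]
      have hjne : ((jj i : ℕ) : ℂ) ≠ 0 := Nat.cast_ne_zero.mpr (hjpos i).ne'
      push_cast
      field_simp
    have hint : ∫ y in cube 2, Fx y = ((2*Real.pi : ℝ) : ℂ)^2 * 9 := by
      calc ∫ y in cube 2, Fx y
          = ∫ y in cube 2, ∏ i, (fun (i : Fin 2) (t : ℝ) =>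
              ((((jj i : ℝ))⁻¹ * (Complex.normSq (stmt9Ek (2 * jj i) (x i - t)) +
                Complex.normSq (stmt9Ek (jj i) (x i - t))) : ℝ) : ℂ)) i (y i) := by
            refine MeasureTheory.setIntegral_congr_fun
              (show MeasurableSet (cube 2) from measurableSet_Icc) (fun y _ => ?_)
            simp only [hFxdef, hRf]
            rw [Complex.ofReal_prod]
        _ = ∏ i, ∫ t in Set.Icc (0:ℝ) (2*Real.pi), (fun (i : Fin 2) (t : ℝ) =>
              ((((jj i : ℝ))⁻¹ * (Complex.normSq (stmt9Ek (2 * jj i) (x i - t)) +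
                Complex.normSq (stmt9Ek (jj i) (x i - t))) : ℝ) : ℂ)) i t :=
            stmt9_lint2 (fun (i : Fin 2) (t : ℝ) =>
              ((((jj i : ℝ))⁻¹ * (Complex.normSq (stmt9Ek (2 * jj i) (x i - t)) +
                Complex.normSq (stmt9Ek (jj i) (x i - t))) : ℝ) : ℂ))
        _ = (3 * ((2*Real.pi : ℝ) : ℂ)) * (3 * ((2*Real.pi : ℝ) : ℂ)) := by
            rw [Fin.prod_univ_two]
            dsimp only
            rw [hIcoord 0, hIcoord 1]
        _ = ((2*Real.pi : ℝ) : ℂ)^2 * 9 := by ring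
    -- apply the cubature formula
    have hcubeq := hcub n hn3 N hNle Fx hmemFx
    rw [hint] at hcubeq
    have hpine : ((2*Real.pi : ℝ) : ℂ) ≠ 0 := Complex.ofReal_ne_zero.mpr (by positivity)
    have hval : (fibb n : ℂ)⁻¹ * ∑ ν ∈ Finset.Icc 1 (fibb n), Fx (fibPoint n ν) = 9 := by
      have hπc : ((Real.pi : ℝ) : ℂ) ≠ 0 := Complex.ofReal_ne_zero.mpr Real.pi_ne_zero
      rw [hcubeq, Complex.ofReal_pow]
      push_cast
      field_simp
    have hbne : ((fibb n : ℕ) : ℂ) ≠ 0 := Nat.cast_ne_zero.mpr hbpos.ne'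
    have hsumIcc : ∑ ν ∈ Finset.Icc 1 (fibb n), Rf (fibPoint n ν) = 9 * fibb n := by
      have h2 : ((∑ ν ∈ Finset.Icc 1 (fibb n), Rf (fibPoint n ν) : ℝ) : ℂ)
          = ((9 * fibb n : ℝ) : ℂ) := by
        have hS : ∑ ν ∈ Finset.Icc 1 (fibb n), Fx (fibPoint n ν) = 9 * (fibb n : ℂ) := by
          calc ∑ ν ∈ Finset.Icc 1 (fibb n), Fx (fibPoint n ν)
              = (fibb n : ℂ) * ((fibb n : ℂ)⁻¹ * ∑ ν ∈ Finset.Icc 1 (fibb n), Fx (fibPoint n ν)) := by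
                field_simp
            _ = (fibb n : ℂ) * 9 := by rw [hval]
            _ = 9 * (fibb n : ℂ) := by ring
        have he : ∀ ν ∈ Finset.Icc 1 (fibb n), ((Rf (fibPoint n ν) : ℝ) : ℂ)
            = Fx (fibPoint n ν) := fun ν _ => by rw [hFxdef]
        rw [Complex.ofReal_sum, Finset.sum_congr rfl he, hS]
        push_cast
        ring
      exact_mod_cast h2
    have hsumFin : ∑ ν : Fin (fibb n), Rf (fibPoint n ((ν : ℕ) + 1)) = 9 * fibb n := by
      rw [Fin.sum_univ_eq_sum_range (fun ν => Rf (fibPoint n (ν + 1))) (fibb n)]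
      rw [← hsumIcc, ← Finset.Ico_add_one_right_eq_Icc, Finset.sum_Ico_eq_sum_range]
      refine Finset.sum_congr (by norm_num) fun i _ => by rw [add_comm]
    have hker : ∀ ν : ℕ, ‖vpKd jj (x - fibPoint n ν)‖ ≤ Rf (fibPoint n ν) := by
      intro ν
      rw [vpKd, norm_prod, hRf]
      refine Finset.prod_le_prod (fun i _ => norm_nonneg _) (fun i _ => ?_)
      have h := stmt9_L2 (jj i) ((x - fibPoint n ν) i)
      simpa [Pi.sub_apply] using h
    have hbposR : (0:ℝ) < fibb n := by exact_mod_cast hbpos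
    calc ‖(fibb n : ℂ)⁻¹ * ∑ ν : Fin (fibb n),
            a ν * ((‖vpKd jj (x - fibPoint n ((ν : ℕ) + 1))‖ : ℝ) : ℂ)‖
        = ((fibb n : ℝ))⁻¹ * ‖∑ ν : Fin (fibb n),
            a ν * ((‖vpKd jj (x - fibPoint n ((ν : ℕ) + 1))‖ : ℝ) : ℂ)‖ := by
          rw [norm_mul, norm_inv, Complex.norm_natCast]
      _ ≤ ((fibb n : ℝ))⁻¹ * ∑ ν : Fin (fibb n), ‖
            (a ν * ((‖vpKd jj (x - fibPoint n ((ν : ℕ) + 1))‖ : ℝ) : ℂ))‖ :=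
          mul_le_mul_of_nonneg_left (norm_sum_le _ _) (by positivity)
      _ = ((fibb n : ℝ))⁻¹ * ∑ ν : Fin (fibb n), ‖a ν‖
            * ‖vpKd jj (x - fibPoint n ((ν : ℕ) + 1))‖ := by
          congr 1
          refine Finset.sum_congr rfl fun ν _ => ?_
          rw [norm_mul, Complex.norm_real, norm_norm]
      _ ≤ ((fibb n : ℝ))⁻¹ * ∑ ν : Fin (fibb n), M * Rf (fibPoint n ((ν : ℕ) + 1)) := by
          refine mul_le_mul_of_nonneg_left (Finset.sum_le_sum fun ν _ => ?_) (by positivity)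
          exact mul_le_mul (hMle ν) (hker ((ν : ℕ) + 1)) (norm_nonneg _) hM0
      _ = ((fibb n : ℝ))⁻¹ * (M * ∑ ν : Fin (fibb n), Rf (fibPoint n ((ν : ℕ) + 1))) := by
          rw [← Finset.mul_sum]
      _ = ((fibb n : ℝ))⁻¹ * (M * (9 * fibb n)) := by rw [hsumFin]
      _ = 9 * M := by field_simp
end
end
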